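/- Let f: ℝⁿ → ℝ be differentiable at x, let ε > 0 and g ∈ ℝⁿ with g ≠ 0, ‖g‖ ≥ ε, and ‖g − ∇f(x)‖ ≤ ε, and define the reduced direction d := −((‖g‖ − ε)/‖g‖) g. Then the sufficient descent inequality ⟨∇f(x), d⟩ ≤ −‖d‖² holds. -/

import Mathlib

/-- Proposition 4.4: if `g` approximates `∇f(x)` with error `ε`, `g ≠ 0`, `‖g‖ ≥ ε`,
then the reduced direction `d = -((‖g‖ - ε)/‖g‖) g` satisfies the sufficient descent
condition `⟨∇f(x), d⟩ ≤ -‖d‖²`. -/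
theorem stmt12 {n : ℕ} (f : EuclideanSpace ℝ (Fin n) → ℝ)
    (x : EuclideanSpace ℝ (Fin n)) (hf : DifferentiableAt ℝ f x)
    (ε : ℝ) (hε : 0 < ε) (g : EuclideanSpace ℝ (Fin n))
    (hg0 : g ≠ 0) (hgε : ε ≤ ‖g‖)
    (happrox : ‖g - gradient f x‖ ≤ ε)
    (d : EuclideanSpace ℝ (Fin n))
    (hd : d = -(((‖g‖ - ε) / ‖g‖) • g)) :
    (inner ℝ (gradient f x) d : ℝ) ≤ -‖d‖ ^ 2 := by
  set G := gradient f x with hG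
  have hng : 0 < ‖g‖ := norm_pos_iff.mpr hg0
  set c : ℝ := (‖g‖ - ε) / ‖g‖ with hc
  have hc0 : 0 ≤ c := div_nonneg (by linarith) hng.le
  have hcg : c * ‖g‖ = ‖g‖ - ε := div_mul_cancel₀ _ hng.ne'
  subst hd
  have h1 : (inner ℝ G (-(c • g)) : ℝ) = -(c * inner ℝ G g) := by
    rw [inner_neg_right, real_inner_smul_right]
  have h2 : ‖-(c • g)‖ = c * ‖g‖ := by
    rw [norm_neg, norm_smul, Real.norm_eq_abs, abs_of_nonneg hc0]
  rw [h1, h2]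
  have key : ‖g‖ ^ 2 - ε * ‖g‖ ≤ inner ℝ G g := by
    have hcs : (inner ℝ (g - G) g : ℝ) ≤ ‖g - G‖ * ‖g‖ := real_inner_le_norm _ _
    have : (inner ℝ (g - G) g : ℝ) = ‖g‖ ^ 2 - inner ℝ G g := by
      rw [inner_sub_left, real_inner_self_eq_norm_sq]
    nlinarith [mul_le_mul_of_nonneg_right happrox hng.le]
  nlinarith [mul_le_mul_of_nonneg_left key hc0, hcg, sq_nonneg (c * ‖g‖)]
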